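/- arXiv:1702.03667 — 2 statements merged into one kernel-verified Lean document; each statement's English description precedes it below -/
import Mathlib

section
/- Suppose ln²n = o(m), m < (1-ε)·n ln n/ln ln n for some fixed ε > 0, and p(1-(1-p)^{n-1}) = (ln n + c_n)/m with c_n → c ∈ (-∞,∞]. Then for every vertex v, P(deg(v) = 1 in G(n,m,p)) = o(1/n); consequently, with high probability G(n,m,p) has no vertex of degree 1. -/
open MeasureTheory Filter

noncomputable def bern (p : ℝ) : Measure Bool :=
  (PMF.bernoulli (min (Real.toNNReal p) 1) (min_le_right _ _)).toMeasure

/-- The random intersection graph model: the sample space is the bipartite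
choice structure `ω : Fin n → Fin m → Bool`, where `ω v w = true` means vertex `v`
chose feature `w`, each choice made independently with probability `p`. -/
noncomputable def rig (n m : ℕ) (p : ℝ) : Measure (Fin n → Fin m → Bool) :=
  Measure.pi fun _ => Measure.pi fun _ => bern p

/-- The intersection graph determined by the choices `ω`:
two distinct vertices are adjacent iff they share a feature. -/
def rigGraph {n m : ℕ} (ω : Fin n → Fin m → Bool) : SimpleGraph (Fin n) where
  Adj v v' := v ≠ v' ∧ ∃ w, ω v w = true ∧ ω v' w = true
  symm := ⟨by rintro v v' ⟨h, w, h1, h2⟩; exact ⟨h.symm, w, h2, h1⟩⟩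
  loopless := ⟨by rintro v ⟨h, -⟩; exact h rfl⟩

/-- degree of `v` in the intersection graph -/
noncomputable def deg {n m : ℕ} (ω : Fin n → Fin m → Bool) (v : Fin n) : ℕ :=
  Set.ncard {u | (rigGraph ω).Adj v u}

/-- `W(v)`: number of features chosen by `v` -/
noncomputable def Wv {n m : ℕ} (ω : Fin n → Fin m → Bool) (v : Fin n) : ℕ :=
  Set.ncard {w | ω v w = true}

/-- `V(w)`: number of vertices choosing feature `w` -/
noncomputable def Vw {n m : ℕ} (ω : Fin n → Fin m → Bool) (w : Fin m) : ℕ :=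
  Set.ncard {v | ω v w = true}

/-- `W'(v)`: number of features chosen by `v` that are chosen by at least two vertices -/
noncomputable def Wv' {n m : ℕ} (ω : Fin n → Fin m → Bool) (v : Fin n) : ℕ :=
  Set.ncard {w | ω v w = true ∧ 2 ≤ Set.ncard {u | ω u w = true}}

/-- `W(S)`: number of features chosen by at least one vertex of `S` -/
noncomputable def WS {n m : ℕ} (ω : Fin n → Fin m → Bool) (S : Set (Fin n)) : ℕ :=
  Set.ncard {w | ∃ v ∈ S, ω v w = true}

/-- `V(R)`: number of vertices choosing at least one feature of `R` -/
noncomputable def VR {n m : ℕ} (ω : Fin n → Fin m → Bool) (R : Set (Fin m)) : ℕ :=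
  Set.ncard {v | ∃ w ∈ R, ω v w = true}

/-- `W''(K)`: number of features chosen by at least two vertices of `K` -/
noncomputable def WSpp {n m : ℕ} (ω : Fin n → Fin m → Bool) (K : Set (Fin n)) : ℕ :=
  Set.ncard {w | 2 ≤ Set.ncard {v | v ∈ K ∧ ω v w = true}}

/-- `N(S)`: number of vertices outside `S` adjacent to at least one vertex of `S` -/
noncomputable def NS {n m : ℕ} (ω : Fin n → Fin m → Bool) (S : Set (Fin n)) : ℕ :=
  Set.ncard {u | u ∉ S ∧ ∃ v ∈ S, (rigGraph ω).Adj v u}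

noncomputable def d0 (n m : ℕ) (p : ℝ) : ℝ := m * p * (1 - (1 - p) ^ (n - 1))

noncomputable def d1 (n m : ℕ) (p : ℝ) : ℝ := n * m * p ^ 2


section AuxRIG
open Finset Real

def wt (p : ℝ) (b : Bool) : ℝ := if b then p else 1 - p

lemma bern_singleton (p : ℝ) (hp0 : 0 ≤ p) (hp1 : p ≤ 1) (b : Bool) :
    bern p {b} = ENNReal.ofReal (wt p b) := by
  have hmin : min (Real.toNNReal p) 1 = Real.toNNReal p :=
    min_eq_left (Real.toNNReal_le_one.2 hp1)
  rw [bern, PMF.toMeasure_apply_singleton _ _ (measurableSet_singleton b)]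
  cases b with
  | true => simp [PMF.bernoulli_apply, hmin, wt]; rfl
  | false =>
    simp only [PMF.bernoulli_apply, hmin, wt, Bool.cond_false, if_false]
    change 1 - ENNReal.ofReal p = _
    rw [← ENNReal.ofReal_one, ← ENNReal.ofReal_sub _ hp0]
    simp

instance bern_prob (p : ℝ) : IsProbabilityMeasure (bern p) := by
  unfold bern; infer_instance

instance rig_prob (n m : ℕ) (p : ℝ) : IsProbabilityMeasure (rig n m p) := by
  unfold rig; infer_instance

lemma rig_singleton (n m : ℕ) (p : ℝ) (hp0 : 0 ≤ p) (hp1 : p ≤ 1)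
    (x : Fin n → Fin m → Bool) :
    rig n m p {x} = ∏ v, ∏ w, ENNReal.ofReal (wt p (x v w)) := by
  rw [rig, ← Set.univ_pi_singleton x, Measure.pi_pi]
  congr 1
  ext v
  rw [← Set.univ_pi_singleton (x v), Measure.pi_pi]
  exact Finset.prod_congr rfl fun w _ => bern_singleton p hp0 hp1 _

lemma rig_apply_toReal (n m : ℕ) (p : ℝ) (hp0 : 0 ≤ p) (hp1 : p ≤ 1)
    (S : Set (Fin n → Fin m → Bool)) [DecidablePred (· ∈ S)] :
    (rig n m p S).toReal = ∑ ω ∈ Finset.univ.filter (· ∈ S), ∏ v, ∏ w, wt p (ω v w) := by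
  have hwt : ∀ b, 0 ≤ wt p b := by
    intro b; cases b <;> simp [wt] <;> linarith
  have hS : S = ⋃ ω ∈ Finset.univ.filter (· ∈ S), ({ω} : Set _) := by
    ext ω; simp
  conv_lhs => rw [hS]
  rw [measure_biUnion_finset]
  · rw [ENNReal.toReal_sum (by intro a _; simp [rig_singleton n m p hp0 hp1,
      ENNReal.prod_ne_top, ENNReal.ofReal_ne_top])]
    refine Finset.sum_congr rfl fun ω _ => ?_
    rw [rig_singleton n m p hp0 hp1, ENNReal.toReal_prod]
    refine Finset.prod_congr rfl fun v _ => ?_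
    rw [ENNReal.toReal_prod]
    exact Finset.prod_congr rfl fun w _ => ENNReal.toReal_ofReal (hwt _)
  · intro a _ b _ hab
    simp [Function.onFun, Set.disjoint_singleton, hab]
  · intro b _; exact measurableSet_singleton b

def adjB {m : ℕ} (s t : Fin m → Bool) : Prop := ∃ w, s w = true ∧ t w = true

instance {m : ℕ} (s t : Fin m → Bool) : Decidable (adjB s t) := by
  unfold adjB; infer_instance

noncomputable def Wr (p : ℝ) {m : ℕ} (s : Fin m → Bool) : ℝ := ∏ w, wt p (s w)

def cnt {m : ℕ} (s : Fin m → Bool) : ℕ := (univ.filter (fun w => s w = true)).card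

noncomputable def PA (p : ℝ) {m : ℕ} (s : Fin m → Bool) : ℝ :=
  ∑ t, Wr p t * (if adjB s t then 1 else 0)

noncomputable def PN (p : ℝ) {m : ℕ} (s : Fin m → Bool) : ℝ :=
  ∑ t, Wr p t * (if adjB s t then 0 else 1)

section
variable {p : ℝ} {m : ℕ}

lemma wt_nonneg (hp0 : 0 ≤ p) (hp1 : p ≤ 1) (b : Bool) : 0 ≤ wt p b := by
  cases b <;> simp [wt] <;> linarith

lemma Wr_nonneg (hp0 : 0 ≤ p) (hp1 : p ≤ 1) (s : Fin m → Bool) : 0 ≤ Wr p s :=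
  Finset.prod_nonneg fun w _ => wt_nonneg hp0 hp1 _

lemma sum_pi_prod {k : ℕ} (g : Fin k → Bool → ℝ) :
    ∑ s : Fin k → Bool, ∏ w, g w (s w) = ∏ w, (g w true + g w false) := by
  have := Finset.prod_univ_sum (fun _ : Fin k => (univ : Finset Bool)) g
  simp only [Fintype.piFinset_univ] at this
  rw [← this]
  exact Finset.prod_congr rfl fun w _ => by simp [Finset.sum_ite_eq]

lemma sum_Wr : ∑ s : Fin m → Bool, Wr p s = 1 := by
  unfold Wr
  rw [sum_pi_prod (fun _ b => wt p b)]
  simp [wt]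

lemma PN_eq (s : Fin m → Bool) : PN p s = (1 - p) ^ cnt s := by
  unfold PN
  have h1 : ∀ t : Fin m → Bool, Wr p t * (if adjB s t then (0:ℝ) else 1)
      = ∏ w, (wt p (t w) * (if s w = true ∧ t w = true then 0 else 1)) := by
    intro t
    rw [Finset.prod_mul_distrib]
    unfold Wr
    congr 1
    rcases em (adjB s t) with h | h
    · obtain ⟨w, hw⟩ := h
      rw [if_pos ⟨w, hw⟩, Finset.prod_eq_zero (Finset.mem_univ w) (by rw [if_pos hw])]
    · rw [if_neg h, Finset.prod_eq_one]
      intro w _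
      rw [if_neg (fun hw => h ⟨w, hw⟩)]
  simp_rw [h1]
  rw [sum_pi_prod (fun w b => wt p b * (if s w = true ∧ b = true then 0 else 1))]
  have h2 : ∀ w, (wt p true * (if s w = true ∧ true = true then (0:ℝ) else 1)
      + wt p false * (if s w = true ∧ false = true then 0 else 1))
      = if s w = true then (1 - p) else 1 := by
    intro w
    by_cases h : s w = true <;> simp [h, wt]
  refine (Finset.prod_congr rfl fun w _ => h2 w).trans ?_
  rw [Finset.prod_ite, Finset.prod_const, Finset.prod_const, one_pow, mul_one, cnt]

lemma PA_add_PN (s : Fin m → Bool) : PA p s + PN p s = 1 := by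
  unfold PA PN
  rw [← Finset.sum_add_distrib]
  have h2 : ∀ t : Fin m → Bool, Wr p t * (if adjB s t then (1:ℝ) else 0)
      + Wr p t * (if adjB s t then 0 else 1) = Wr p t := fun t => by
    by_cases h : adjB s t <;> simp [h]
  simp_rw [h2]
  exact sum_Wr

lemma PA_eq (s : Fin m → Bool) : PA p s = 1 - (1 - p) ^ cnt s := by
  have := PA_add_PN (p := p) s
  rw [PN_eq] at this; linarith

lemma PA_le (hp0 : 0 ≤ p) (hp1 : p ≤ 1) (s : Fin m → Bool) : PA p s ≤ cnt s * p := by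
  rw [PA_eq]
  have h := one_add_mul_le_pow (a := -p) (by linarith) (cnt s)
  have h' : (1 : ℝ) + -p = 1 - p := by ring
  rw [h'] at h
  have h'' : (cnt s : ℝ) * -p = -(cnt s * p) := by ring
  rw [h''] at h
  linarith

lemma PA_nonneg (hp0 : 0 ≤ p) (hp1 : p ≤ 1) (s : Fin m → Bool) : 0 ≤ PA p s :=
  Finset.sum_nonneg fun t _ => mul_nonneg (Wr_nonneg hp0 hp1 t) (by positivity)

lemma PN_nonneg (hp0 : 0 ≤ p) (hp1 : p ≤ 1) (s : Fin m → Bool) : 0 ≤ PN p s :=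
  Finset.sum_nonneg fun t _ => mul_nonneg (Wr_nonneg hp0 hp1 t) (by positivity)

lemma PN_le_one (hp0 : 0 ≤ p) (hp1 : p ≤ 1) (s : Fin m → Bool) : PN p s ≤ 1 := by
  have := PA_add_PN (p := p) s
  have := PA_nonneg hp0 hp1 s
  linarith

lemma sum_pi_prod_ind {k : ℕ} (g : Bool → ℝ) (w : Fin k) :
    ∑ s : Fin k → Bool, (if s w then (1:ℝ) else 0) * ∏ w', g (s w')
      = g true * (g true + g false) ^ (k - 1) := by
  have h1 : ∀ s : Fin k → Bool, (if s w then (1:ℝ) else 0) * ∏ w', g (s w')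
      = ∏ w', ((if w' = w then (if s w' then (1:ℝ) else 0) else 1) * g (s w')) := by
    intro s
    rw [Finset.prod_mul_distrib, Finset.prod_ite_eq' univ w (fun w' => if s w' then (1:ℝ) else 0),
      if_pos (Finset.mem_univ w)]
  simp_rw [h1]
  rw [sum_pi_prod (fun w' b => (if w' = w then (if b then (1:ℝ) else 0) else 1) * g b)]
  have h2 : ∀ w' : Fin k, ((if w' = w then (if true = true then (1:ℝ) else 0) else 1) * g true
      + (if w' = w then (if false = true then (1:ℝ) else 0) else 1) * g false)
      = if w' = w then g true else (g true + g false) := by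
    intro w'
    by_cases h : w' = w <;> simp [h]
  refine (Finset.prod_congr rfl fun w' _ => h2 w').trans ?_
  rw [Finset.prod_ite, Finset.prod_const, Finset.prod_const]
  congr 2
  · rw [Finset.filter_eq' univ w, if_pos (Finset.mem_univ w), Finset.card_singleton, pow_one]
  · rw [Finset.filter_ne' univ w, Finset.card_erase_of_mem (Finset.mem_univ w),
      Finset.card_univ, Fintype.card_fin]

lemma sum_Wr_cnt_pow (x : ℝ) :
    ∑ s : Fin m → Bool, Wr p s * (cnt s : ℝ) * x ^ cnt s
      = m * (p * x) * (p * x + (1 - p)) ^ (m - 1) := by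
  have key : ∀ s : Fin m → Bool, Wr p s * x ^ cnt s
      = ∏ w, (if s w then p * x else 1 - p) := by
    intro s
    unfold Wr cnt
    rw [show (x ^ (univ.filter (fun w => s w = true)).card : ℝ)
        = ∏ w, (if s w = true then x else 1) by
      rw [Finset.prod_ite, Finset.prod_const, Finset.prod_const, one_pow, mul_one],
      ← Finset.prod_mul_distrib]
    exact Finset.prod_congr rfl fun w _ => by by_cases h : s w <;> simp [h, wt]
  have hc : ∀ s : Fin m → Bool, (cnt s : ℝ) = ∑ w, (if s w then (1:ℝ) else 0) := by
    intro s
    unfold cnt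
    rw [Finset.sum_ite, Finset.sum_const, Finset.sum_const]
    simp
  calc ∑ s : Fin m → Bool, Wr p s * (cnt s : ℝ) * x ^ cnt s
      = ∑ s : Fin m → Bool, ∑ w, (if s w then (1:ℝ) else 0) * ∏ w', (if s w' then p * x else 1 - p) := by
        refine Finset.sum_congr rfl fun s _ => ?_
        rw [← Finset.sum_mul, ← hc, ← key]; ring
    _ = ∑ w : Fin m, ∑ s : Fin m → Bool, (if s w then (1:ℝ) else 0) * ∏ w', (if s w' then p * x else 1 - p) :=
        Finset.sum_comm
    _ = ∑ w : Fin m, (p * x) * (p * x + (1 - p)) ^ (m - 1) := by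
        refine Finset.sum_congr rfl fun w _ => ?_
        rw [sum_pi_prod_ind (fun b => if b then p * x else 1 - p) w]
        simp
    _ = m * (p * x) * (p * x + (1 - p)) ^ (m - 1) := by
        rw [Finset.sum_const, Finset.card_univ, Fintype.card_fin, nsmul_eq_mul]; ring

end

section EV
variable {n m : ℕ} {p : ℝ}

lemma sum_pi_prod' {ι κ : Type*} [Fintype ι] [Fintype κ] [DecidableEq ι] (g : ι → κ → ℝ) :
    ∑ f : ι → κ, ∏ i, g i (f i) = ∏ i, ∑ x, g i x := by
  have := Finset.prod_univ_sum (fun _ : ι => (univ : Finset κ)) g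
  simp only [Fintype.piFinset_univ] at this
  rw [this]

def Qp {n m : ℕ} (v u0 : Fin n) (s : Fin m → Bool) (u : Fin n) (t : Fin m → Bool) : Prop :=
  (u = v → t = s) ∧ (u ≠ v → u = u0 → adjB s t) ∧ (u ≠ v → u ≠ u0 → ¬ adjB s t)

def Ev (v u0 : Fin n) : Set (Fin n → Fin m → Bool) :=
  {ω | adjB (ω v) (ω u0) ∧ ∀ u, u ≠ v → u ≠ u0 → ¬ adjB (ω v) (ω u)}

lemma measure_Ev (hp0 : 0 ≤ p) (hp1 : p ≤ 1) {v u0 : Fin n} (hne : u0 ≠ v) :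
    (rig n m p (Ev v u0)).toReal = ∑ s : Fin m → Bool, Wr p s * PA p s * PN p s ^ (n - 2) := by
  classical
  rw [rig_apply_toReal n m p hp0 hp1 _, Finset.sum_filter]
  have h1 : ∀ ω : Fin n → Fin m → Bool,
      (if ω ∈ Ev v u0 then ∏ u, ∏ w, wt p (ω u w) else 0)
      = ∑ s : Fin m → Bool, ∏ u, (Wr p (ω u) * (if Qp v u0 s u (ω u) then 1 else 0)) := by
    intro ω
    rw [Finset.sum_eq_single (ω v)]
    · rw [Finset.prod_mul_distrib, Finset.prod_boole]
      have hiff : (∀ u, Qp v u0 (ω v) u (ω u)) ↔ ω ∈ Ev v u0 := by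
        constructor
        · intro h
          exact ⟨(h u0).2.1 hne rfl, fun u hu1 hu2 => (h u).2.2 hu1 hu2⟩
        · rintro ⟨h1, h2⟩ u
          refine ⟨fun hu => by rw [hu], fun _ hu => by rw [hu]; exact h1, h2 u⟩
      by_cases h : ω ∈ Ev v u0
      · rw [if_pos h, if_pos (fun u _ => (hiff.2 h) u)]
        rw [mul_one]
        exact Finset.prod_congr rfl fun u _ => rfl
      · rw [if_neg h, if_neg (fun hall => h (hiff.1 fun u => hall u (Finset.mem_univ u))), mul_zero]
    · intro s _ hs
      refine Finset.prod_eq_zero (Finset.mem_univ v) ?_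
      rw [if_neg, mul_zero]
      exact fun hq => hs ((hq.1 rfl) ▸ rfl)
    · intro h
      exact absurd (Finset.mem_univ (ω v)) h
  calc ∑ ω : Fin n → Fin m → Bool, (if ω ∈ Ev v u0 then ∏ u, ∏ w, wt p (ω u w) else 0)
      = ∑ ω : Fin n → Fin m → Bool, ∑ s : Fin m → Bool,
          ∏ u, (Wr p (ω u) * (if Qp v u0 s u (ω u) then 1 else 0)) :=
        Finset.sum_congr rfl fun ω _ => h1 ω
    _ = ∑ s : Fin m → Bool, ∑ ω : Fin n → Fin m → Bool,
          ∏ u, (Wr p (ω u) * (if Qp v u0 s u (ω u) then 1 else 0)) := Finset.sum_comm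
    _ = ∑ s : Fin m → Bool, Wr p s * PA p s * PN p s ^ (n - 2) := by
        refine Finset.sum_congr rfl fun s _ => ?_
        rw [sum_pi_prod' (fun u t => Wr p t * (if Qp v u0 s u t then 1 else 0))]
        have hv : ∑ t : Fin m → Bool, Wr p t * (if Qp v u0 s v t then (1:ℝ) else 0) = Wr p s := by
          have : ∀ t : Fin m → Bool, (Qp v u0 s v t) ↔ t = s := by
            intro t
            constructor
            · exact fun h => h.1 rfl
            · rintro rfl
              exact ⟨fun _ => rfl, fun h _ => absurd rfl h, fun h _ => absurd rfl h⟩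
          simp_rw [this]
          simp [mul_ite]
        have hu0 : ∑ t : Fin m → Bool, Wr p t * (if Qp v u0 s u0 t then (1:ℝ) else 0) = PA p s := by
          have : ∀ t : Fin m → Bool, (Qp v u0 s u0 t) ↔ adjB s t := by
            intro t
            constructor
            · exact fun h => h.2.1 hne rfl
            · intro h
              exact ⟨fun hv' => absurd hv' hne, fun _ _ => h, fun _ h' => absurd rfl h'⟩
          simp_rw [this]
          rfl
        have hrest : ∀ u : Fin n, u ≠ v → u ≠ u0 →
            ∑ t : Fin m → Bool, Wr p t * (if Qp v u0 s u t then (1:ℝ) else 0) = PN p s := by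
          intro u hu1 hu2
          have : ∀ t : Fin m → Bool, (Qp v u0 s u t) ↔ ¬ adjB s t := by
            intro t
            constructor
            · exact fun h => h.2.2 hu1 hu2
            · intro h
              exact ⟨fun hv' => absurd hv' hu1, fun _ hu' => absurd hu' hu2, fun _ _ => h⟩
          simp_rw [this]
          unfold PN
          refine Finset.sum_congr rfl fun t _ => ?_
          by_cases h : adjB s t <;> simp [h]
        have hsub : ({v, u0} : Finset (Fin n)) ⊆ univ := Finset.subset_univ _
        rw [← Finset.prod_sdiff hsub, Finset.prod_pair (Ne.symm hne)]
        rw [hv, hu0]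
        have hcard : (univ \ ({v, u0} : Finset (Fin n))).card = n - 2 := by
          rw [Finset.card_sdiff_of_subset hsub, Finset.card_pair (Ne.symm hne), Finset.card_univ,
            Fintype.card_fin]
        rw [Finset.prod_congr rfl (fun u hu => hrest u
            (by rcases Finset.mem_sdiff.1 hu with ⟨_, h2⟩; intro h; exact h2 (by simp [h]))
            (by rcases Finset.mem_sdiff.1 hu with ⟨_, h2⟩; intro h; exact h2 (by simp [h]))),
          Finset.prod_const, hcard]
        ring

end EV

lemma prob_deg_one_le (n m : ℕ) (p : ℝ) (hp0 : 0 < p) (hp1 : p < 1) (v : Fin n) :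
    (rig n m p {ω | deg ω v = 1}).toReal
      ≤ n * m * p ^ 2 * (1 - p) ^ (n - 2) * (1 - p * (1 - (1 - p) ^ (n - 2))) ^ (m - 1) := by
  classical
  set x : ℝ := (1 - p) ^ (n - 2) with hx
  have hp0' : (0:ℝ) ≤ p := le_of_lt hp0
  have hp1' : p ≤ 1 := le_of_lt hp1
  have hx0 : 0 ≤ x := pow_nonneg (by linarith) _
  have hx1 : x ≤ 1 := pow_le_one₀ (by linarith) (by linarith)
  have hb0 : (0:ℝ) ≤ p * x + (1 - p) := by nlinarith
  -- inclusion
  have hsub : {ω : Fin n → Fin m → Bool | deg ω v = 1}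
      ⊆ ⋃ u0 ∈ Finset.univ.erase v, Ev v u0 := by
    intro ω h
    obtain ⟨a, ha⟩ := Set.ncard_eq_one.1 h
    have hadj : (rigGraph ω).Adj v a := by
      have : a ∈ {u | (rigGraph ω).Adj v u} := by rw [ha]; exact rfl
      exact this
    refine Set.mem_biUnion (Finset.mem_erase.2 ⟨Ne.symm hadj.1, Finset.mem_univ a⟩) ?_
    refine ⟨hadj.2, fun u hu1 hu2 hadjB => ?_⟩
    have : u ∈ {u | (rigGraph ω).Adj v u} := ⟨Ne.symm hu1, hadjB⟩
    rw [ha] at this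
    exact hu2 this
  have hmono : rig n m p {ω | deg ω v = 1}
      ≤ ∑ u0 ∈ Finset.univ.erase v, rig n m p (Ev v u0) :=
    le_trans (measure_mono hsub) (measure_biUnion_finset_le _ _)
  have hfin : ∑ u0 ∈ Finset.univ.erase v, rig n m p (Ev v u0) ≠ ⊤ :=
    (ENNReal.sum_lt_top.2 fun u0 _ => measure_lt_top _ _).ne
  have h1 : (rig n m p {ω | deg ω v = 1}).toReal
      ≤ ∑ u0 ∈ Finset.univ.erase v, (rig n m p (Ev v u0)).toReal := by
    rw [← ENNReal.toReal_sum (fun u0 _ => measure_ne_top _ _)]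
    exact ENNReal.toReal_mono hfin hmono
  set S : ℝ := ∑ s : Fin m → Bool, Wr p s * PA p s * PN p s ^ (n - 2) with hS
  have h2 : ∑ u0 ∈ Finset.univ.erase v, (rig n m p (Ev v u0)).toReal
      = ((n : ℝ) - 1) * S := by
    rw [Finset.sum_congr rfl (fun u0 hu0 => measure_Ev hp0' hp1' (Finset.mem_erase.1 hu0).1),
      Finset.sum_const, Finset.card_erase_of_mem (Finset.mem_univ v), Finset.card_univ,
      Fintype.card_fin, nsmul_eq_mul]
    rw [Nat.cast_sub v.pos, Nat.cast_one]
  have h3 : S ≤ p * (m * (p * x) * (p * x + (1 - p)) ^ (m - 1)) := by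
    rw [← sum_Wr_cnt_pow (p := p) x, Finset.mul_sum]
    refine Finset.sum_le_sum fun s _ => ?_
    have hwr := Wr_nonneg hp0' hp1' s
    have hpa := PA_le hp0' hp1' s
    have hpa0 := PA_nonneg hp0' hp1' s
    have hpn0 := PN_nonneg hp0' hp1' s
    have hpneq : PN p s ^ (n - 2) = x ^ cnt s := by
      rw [PN_eq, hx, ← pow_mul, ← pow_mul, Nat.mul_comm]
    rw [hpneq]
    have : Wr p s * PA p s * x ^ cnt s ≤ Wr p s * ((cnt s : ℝ) * p) * x ^ cnt s := by
      apply mul_le_mul_of_nonneg_right _ (pow_nonneg hx0 _)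
      exact mul_le_mul_of_nonneg_left hpa hwr
    refine le_trans this (le_of_eq ?_)
    ring
  calc (rig n m p {ω | deg ω v = 1}).toReal
      ≤ ((n:ℝ) - 1) * S := by rw [← h2]; exact h1
    _ ≤ ((n:ℝ) - 1) * (p * (m * (p * x) * (p * x + (1 - p)) ^ (m - 1))) := by
        apply mul_le_mul_of_nonneg_left h3
        have : (1:ℝ) ≤ n := by exact_mod_cast v.pos
        linarith
    _ ≤ (n:ℝ) * (p * (m * (p * x) * (p * x + (1 - p)) ^ (m - 1))) := by
        apply mul_le_mul_of_nonneg_right _ (by positivity)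
        linarith
    _ = n * m * p ^ 2 * x * (1 - p * (1 - x)) ^ (m - 1) := by
        rw [show (1 : ℝ) - p * (1 - x) = p * x + (1 - p) by ring]
        ring


noncomputable def Bq (n M : ℕ) (P : ℝ) : ℝ :=
  n * M * P ^ 2 * (1 - P) ^ (n - 2) * (1 - P * (1 - (1 - P) ^ (n - 2))) ^ (M - 1)

lemma Bq_nonneg (n M : ℕ) {P : ℝ} (h0 : 0 < P) (h1 : P < 1) : 0 ≤ Bq n M P := by
  have hR0 : (0:ℝ) ≤ (1 - P) ^ (n - 2) := pow_nonneg (by linarith) _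
  have hR1 : (1 - P) ^ (n - 2) ≤ 1 := pow_le_one₀ (by linarith) (by linarith)
  have ha : P * (1 - (1 - P) ^ (n - 2)) ≤ 1 := by nlinarith
  have : (0:ℝ) ≤ 1 - P * (1 - (1 - P) ^ (n - 2)) := by linarith
  unfold Bq
  positivity

lemma mul_exp_neg_le_one {x : ℝ} (hx : 0 ≤ x) : x * Real.exp (-x) ≤ 1 := by
  have h1 : x ≤ Real.exp x := by nlinarith [Real.add_one_le_exp x]
  have h2 := Real.exp_pos (-x)
  calc x * Real.exp (-x) ≤ Real.exp x * Real.exp (-x) :=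
        mul_le_mul_of_nonneg_right h1 (le_of_lt h2)
    _ = 1 := by rw [← Real.exp_add]; simp

lemma mul_exp_neg_anti {a b : ℝ} (ha : 1 ≤ a) (hab : a ≤ b) :
    b * Real.exp (-b) ≤ a * Real.exp (-a) := by
  have h2 : 1 + (b - a) ≤ Real.exp (b - a) := by
    have := Real.add_one_le_exp (b - a); linarith
  have h1 : b ≤ a * Real.exp (b - a) := by nlinarith
  calc b * Real.exp (-b) ≤ (a * Real.exp (b - a)) * Real.exp (-b) :=
        mul_le_mul_of_nonneg_right h1 (Real.exp_pos _).le
    _ = a * Real.exp (-a) := by rw [mul_assoc, ← Real.exp_add]; ring_nf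

lemma pow_le_exp_neg {P : ℝ} (h0 : 0 ≤ P) (h1 : P ≤ 1) (k : ℕ) :
    (1 - P) ^ k ≤ Real.exp (-(P * k)) := by
  have hb : 1 - P ≤ Real.exp (-P) := by have := Real.add_one_le_exp (-P); linarith
  calc (1 - P) ^ k ≤ Real.exp (-P) ^ k := pow_le_pow_left₀ (by linarith) hb k
    _ = Real.exp (-(P * k)) := by rw [← Real.exp_nat_mul]; ring_nf

lemma tendsto_mul_exp_neg_const {ρ : ℝ} (hρ : 0 < ρ) :
    Tendsto (fun y : ℝ => y * Real.exp (-ρ * y)) atTop (nhds 0) := by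
  have := tendsto_rpow_mul_exp_neg_mul_atTop_nhds_zero 1 ρ hρ
  refine this.congr' ?_
  filter_upwards [eventually_ge_atTop (0:ℝ)] with y hy
  rw [Real.rpow_one]

set_option maxHeartbeats 1000000 in
lemma tendsto_nBq (m : ℕ → ℕ) (p c : ℕ → ℝ)
    (hp : ∀ n, p n ∈ Set.Ioo (0 : ℝ) 1)
    (hm : (fun (n : ℕ) => (Real.log n) ^ 2) =o[atTop] fun (n : ℕ) => (m n : ℝ))
    (ε : ℝ) (hε : 0 < ε)
    (hrange : ∀ᶠ (n : ℕ) in atTop, (m n : ℝ) < (1 - ε) * n * Real.log n / Real.log (Real.log n))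
    (heq : ∀ᶠ (n : ℕ) in atTop,
      p n * (1 - (1 - p n) ^ (n - 1)) = (Real.log n + c n) / (m n))
    (hc : (∃ c₀ : ℝ, Tendsto c atTop (nhds c₀)) ∨ Tendsto c atTop atTop) :
    Tendsto (fun n : ℕ => (n : ℝ) * Bq n (m n) (p n)) atTop (nhds 0) := by
  -- eventual lower bound on c
  obtain ⟨C0, hC0le, hC0⟩ : ∃ C0 : ℝ, C0 ≤ 0 ∧ ∀ᶠ n in atTop, C0 ≤ c n := by
    rcases hc with ⟨c₀, hc₀⟩ | hc₀
    · refine ⟨min (c₀ - 1) 0, min_le_right _ _, ?_⟩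
      filter_upwards [hc₀.eventually (eventually_ge_nhds (show c₀ - 1 < c₀ by linarith))] with n hn
      exact le_trans (min_le_left _ _) hn
    · exact ⟨0, le_refl _, hc₀.eventually_ge_atTop 0⟩
  have hmev : ∀ᶠ n : ℕ in atTop, (Real.log n) ^ 2 ≤ (1/2) * (m n : ℝ) := by
    have := hm.def (by norm_num : (0:ℝ) < 1/2)
    filter_upwards [this, eventually_ge_atTop 2] with n hn hn2
    have h2 : (0:ℝ) ≤ (Real.log n)^2 := sq_nonneg _
    have h3 : (0:ℝ) ≤ (m n : ℝ) := Nat.cast_nonneg _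
    simpa [Real.norm_eq_abs, abs_of_nonneg h2, abs_of_nonneg h3] using hn
  have hLtop : Tendsto (fun n : ℕ => Real.log n) atTop atTop :=
    Real.tendsto_log_atTop.comp tendsto_natCast_atTop_atTop
  have hlamtop : Tendsto (fun n : ℕ => Real.log (Real.log n)) atTop atTop :=
    Real.tendsto_log_atTop.comp hLtop
  -- degenerate case ε ≥ 1
  rcases le_or_gt 1 ε with hε1 | hε1
  · exfalso
    have hbad : ∀ᶠ n : ℕ in atTop, False := by
      filter_upwards [hmev, hrange, hLtop.eventually_ge_atTop 1,
        hlamtop.eventually_ge_atTop 1] with n h1 h2 hL hlam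
      have hm0 : (0:ℝ) < (m n : ℝ) := by nlinarith
      have : (1 - ε) * n * Real.log n / Real.log (Real.log n) ≤ 0 := by
        apply div_nonpos_of_nonpos_of_nonneg _ (by linarith)
        have hn0 : (0:ℝ) ≤ (n:ℝ) := Nat.cast_nonneg _
        have h5 : (1:ℝ) - ε ≤ 0 := by linarith
        have h6 : (1 - ε) * (n:ℝ) ≤ 0 := mul_nonpos_of_nonpos_of_nonneg h5 hn0
        exact mul_nonpos_of_nonpos_of_nonneg h6 (by linarith)
      linarith
    obtain ⟨_, hfalse⟩ := hbad.exists
    exact hfalse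
  -- main case
  set ρ : ℝ := ε / (2 * (1 - ε)) with hρdef
  have hρ : 0 < ρ := div_pos hε (by linarith)
  set Kc : ℝ := 2 * Real.exp 2 * Real.exp (1 + 8 * Real.exp 2) with hKc
  have hKc0 : 0 < Kc := by positivity
  set K₁ : ℝ := Kc * 2 * (1 + ρ) * Real.exp (-C0) with hK₁
  set K₂ : ℝ := 2 * Kc with hK₂
  have hK₁0 : 0 < K₁ :=
    mul_pos (mul_pos (mul_pos hKc0 two_pos) (by linarith)) (Real.exp_pos _)
  have hK₂0 : 0 < K₂ := mul_pos two_pos hKc0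
  set g : ℕ → ℝ := fun n => K₁ * (Real.log (Real.log n) * Real.exp (-(ρ * Real.log (Real.log n))))
    + K₂ * (Real.log n * Real.exp (-Real.log n)) with hg
  have hgto : Tendsto g atTop (nhds 0) := by
    have t1 : Tendsto (fun n : ℕ => Real.log (Real.log n)
        * Real.exp (-(ρ * Real.log (Real.log n)))) atTop (nhds 0) := by
      have := (tendsto_mul_exp_neg_const hρ).comp hlamtop
      simpa [Function.comp_def, neg_mul] using this
    have t2 : Tendsto (fun n : ℕ => Real.log n * Real.exp (-Real.log n)) atTop (nhds 0) := by
      have := (tendsto_mul_exp_neg_const (by norm_num : (0:ℝ) < 1)).comp hLtop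
      simpa [Function.comp_def, neg_mul] using this
    have := (t1.const_mul K₁).add (t2.const_mul K₂)
    simpa using this
  refine squeeze_zero' ?_ ?_ hgto
  · filter_upwards [eventually_ge_atTop 1] with n hn
    have := Bq_nonneg n (m n) (hp n).1 (hp n).2
    positivity
  -- the main eventual bound
  filter_upwards [hmev, hrange, heq, hC0, eventually_ge_atTop 2,
    hlamtop.eventually_ge_atTop 4,
    hLtop.eventually_ge_atTop (max 1 (2 * |C0| / ε))] with n hm2 hrg hQdef hγC0 hn2 hlam4 hLbig
  simp only [Bq]
  set P := p n with hP
  set M : ℝ := (m n : ℝ) with hM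
  set L : ℝ := Real.log n with hL
  set lam : ℝ := Real.log L with hlam
  set γ : ℝ := c n with hγ
  set T : ℝ := n * P with hT
  set R : ℝ := (1 - P) ^ (n - 2) with hR
  set QQ : ℝ := P * (1 - (1 - P) ^ (n - 1)) with hQQ
  have hP0 : 0 < P := (hp n).1
  have hP1 : P < 1 := (hp n).2
  have hL1 : 1 ≤ L := le_trans (le_max_left _ _) hLbig
  have hL0 : 0 < L := by linarith
  have hlam0 : 0 < lam := by linarith
  have hM2L : 2 * L ^ 2 ≤ M := by linarith
  have hM1 : 1 ≤ M := by linarith only [hM2L, sq_nonneg (L - 1), hL1]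
  have hMnat : 1 ≤ m n := by rw [hM] at hM1; exact_mod_cast hM1
  have hM0 : 0 < M := by linarith
  have hn0 : (0:ℝ) < (n:ℝ) := by
    have : 0 < n := by omega
    exact_mod_cast this
  have hexpL : Real.exp L = n := Real.exp_log hn0
  have hexplam : Real.exp lam = L := Real.exp_log hL0
  have hQpos : 0 < QQ := by
    have : (1 - P) ^ (n - 1) < 1 :=
      pow_lt_one₀ (by linarith) (by linarith) (by omega)
    have h0 : 0 < 1 - (1 - P) ^ (n - 1) := by linarith
    exact mul_pos hP0 h0
  have hQM : QQ * M = L + γ := by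
    rw [hQdef]; field_simp
  have hLγ : 0 < L + γ := hQM ▸ mul_pos hQpos hM0
  have hQP : QQ ≤ P := by
    have h0 : (0:ℝ) ≤ (1 - P) ^ (n - 1) := pow_nonneg (by linarith) _
    have h1 := mul_nonneg hP0.le h0
    rw [hQQ]
    linarith only [h1]
  have hQ1 : QQ ≤ 1 := le_trans hQP (le_of_lt hP1)
  -- T lower bound
  have hTnQ : n * QQ ≤ T := by
    rw [hT]; exact mul_le_mul_of_nonneg_left hQP (le_of_lt hn0)
  have h2' : M * lam < (1 - ε) * n * L := by
    rw [lt_div_iff₀ hlam0] at hrg; exact hrg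
  have h1ε : (0:ℝ) < 1 - ε := by linarith
  have hT1 : (L + γ) * lam / ((1 - ε) * L) ≤ T := by
    rw [div_le_iff₀ (mul_pos h1ε hL0)]
    calc (L + γ) * lam = QQ * (M * lam) := by rw [← hQM]; ring
      _ ≤ QQ * ((1 - ε) * n * L) := mul_le_mul_of_nonneg_left h2'.le hQpos.le
      _ = (n * QQ) * ((1 - ε) * L) := by ring
      _ ≤ T * ((1 - ε) * L) := mul_le_mul_of_nonneg_right hTnQ
          (mul_nonneg h1ε.le hL0.le)
  have hγε : -(ε / 2) * L ≤ γ := by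
    have h1 : 2 * |C0| / ε ≤ L := le_trans (le_max_right _ _) hLbig
    have h2 : |C0| = -C0 := abs_of_nonpos hC0le
    have h3 : 2 * (-C0) ≤ ε * L := by
      rw [h2] at h1
      rw [div_le_iff₀ hε] at h1
      linarith [h1]
    linarith [hγC0]
  set T0 : ℝ := (1 + ρ) * lam with hT0
  have hT0T : T0 ≤ T := by
    refine le_trans ?_ hT1
    rw [le_div_iff₀ (mul_pos h1ε hL0)]
    have h1 : (1 - ε / 2) * L ≤ L + γ := by linarith
    have h2 : (1 + ρ) * (1 - ε) = 1 - ε / 2 := by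
      rw [hρdef]; field_simp; ring
    calc T0 * ((1 - ε) * L) = ((1 + ρ) * (1 - ε)) * (lam * L) := by rw [hT0]; ring
      _ = lam * ((1 - ε / 2) * L) := by rw [h2]; ring
      _ ≤ lam * (L + γ) := mul_le_mul_of_nonneg_left h1 hlam0.le
      _ = (L + γ) * lam := by ring
  have hT04 : 4 ≤ T0 := by
    have h1 : 1 * lam ≤ (1 + ρ) * lam :=
      mul_le_mul_of_nonneg_right (by linarith only [hρ]) hlam0.le
    rw [hT0]
    linarith only [h1, hlam4]
  have hT2 : 2 ≤ T := by linarith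
  have hT0' : 0 ≤ T := by linarith
  -- pow bounds
  have hcast1 : ((n - 1 : ℕ) : ℝ) = (n : ℝ) - 1 := by
    rw [Nat.cast_sub (by omega)]; norm_num
  have hcast2 : ((n - 2 : ℕ) : ℝ) = (n : ℝ) - 2 := by
    rw [Nat.cast_sub (by omega)]; norm_num
  have hpow1 : (1 - P) ^ (n - 1) ≤ 1 / 2 := by
    have h1 := pow_le_exp_neg (le_of_lt hP0) (le_of_lt hP1) (n - 1)
    have h2 : T - 1 ≤ P * ((n - 1 : ℕ) : ℝ) := by
      rw [hcast1]
      have he : P * ((n:ℝ) - 1) = T - P := by rw [hT]; ring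
      rw [he]
      linarith only [hP1]
    have h3 : Real.exp (-(P * ((n-1:ℕ):ℝ))) ≤ Real.exp (-1) := by
      apply Real.exp_le_exp.2; linarith
    have h4 : Real.exp (-1) ≤ 1/2 := by
      rw [Real.exp_neg]
      have h6 : (2:ℝ) ≤ Real.exp 1 := by linarith only [Real.add_one_le_exp 1]
      calc (Real.exp 1)⁻¹ ≤ (2:ℝ)⁻¹ := inv_anti₀ (by norm_num) h6
        _ ≤ 1/2 := by norm_num
    linarith
  have hRexp : R ≤ Real.exp 2 * Real.exp (-T) := by
    have h1 := pow_le_exp_neg (le_of_lt hP0) (le_of_lt hP1) (n - 2)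
    have h2 : T - 2 ≤ P * ((n - 2 : ℕ) : ℝ) := by
      rw [hcast2]
      have he : P * ((n:ℝ) - 2) = T - 2 * P := by rw [hT]; ring
      rw [he]
      linarith only [hP1]
    have h3 : Real.exp (-(P * ((n-2:ℕ):ℝ))) ≤ Real.exp (2 - T) := by
      apply Real.exp_le_exp.2; linarith
    rw [hR]
    calc (1 - P) ^ (n - 2) ≤ Real.exp (-(P * ((n-2:ℕ):ℝ))) := h1
      _ ≤ Real.exp (2 - T) := h3
      _ = Real.exp 2 * Real.exp (-T) := by rw [← Real.exp_add]; ring_nf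
  have hR0 : 0 ≤ R := pow_nonneg (by linarith) _
  have hR1 : R ≤ 1 := pow_le_one₀ (by linarith) (by linarith)
  have hP2Q : P ≤ 2 * QQ := by
    have h1 := mul_le_mul_of_nonneg_left hpow1 hP0.le
    rw [hQQ]
    linarith only [h1]
  have hMP : M * P ≤ 2 * (L + γ) := by
    have h1 := mul_le_mul_of_nonneg_left hP2Q hM0.le
    linarith only [h1, hQM]
  -- a and D
  set a : ℝ := P * (1 - R) with ha
  set D : ℝ := M * P ^ 2 * R with hD
  have hpowsplit : (1 - P) ^ (n - 1) = R * (1 - P) := by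
    rw [hR, ← pow_succ]
    congr 1
    omega
  have haQ : a = QQ - P ^ 2 * R := by
    rw [ha, hQQ, hpowsplit]; ring
  have ha0 : 0 ≤ a := mul_nonneg hP0.le (by linarith only [hR1])
  have ha1 : a < 1 := by
    have h1 : 1 - R ≤ 1 := by linarith only [hR0]
    have h2 := mul_le_mul_of_nonneg_left h1 hP0.le
    rw [ha]
    have h3 : P * 1 = P := mul_one P
    linarith only [h2, h3, hP1]
  have hD0 : 0 ≤ D := by positivity
  have hexpT1 : Real.exp (-T) ≤ 1 := by
    rw [Real.exp_le_one_iff]; linarith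
  -- D ≤ 8 e²
  have hexp2pos := Real.exp_pos 2
  have hLne : L ≠ 0 := ne_of_gt hL0
  have hPR_le : P * R ≤ Real.exp 2 * Real.exp (-T) :=
    le_trans (mul_le_of_le_one_left hR0 hP1.le) hRexp
  have hLexplam : L * Real.exp (-lam) = 1 := by
    rw [Real.exp_neg, hexplam]; field_simp
  have hDb : D ≤ 8 * Real.exp 2 := by
    rcases le_or_gt γ L with hγL | hγL
    · have hQ2L : QQ ≤ 2 * L / M := by
        rw [hQdef, div_le_div_iff₀ hM0 hM0]
        have h9 : (L + γ) * M ≤ (2 * L) * M :=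
          mul_le_mul_of_nonneg_right (by linarith only [hγL]) hM0.le
        linarith only [h9]
      have h43 : P ≤ 4 * L / M := by
        have h9 := mul_le_mul_of_nonneg_left hQ2L (by norm_num : (0:ℝ) ≤ 2)
        have h10 : 2 * (2 * L / M) = 4 * L / M := by ring
        linarith only [hP2Q, h9, h10]
      have h44 : 4 * L / M ≤ 2 / L := by
        rw [div_le_div_iff₀ hM0 hL0]
        linarith only [hM2L]
      have hPL : P ≤ 2 / L := le_trans h43 h44
      have hMP4 : M * P ≤ 4 * L := by linarith only [hMP, hγL]
      have hPRb : P * R ≤ (2 / L) * Real.exp 2 := by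
        have h5 := mul_le_mul_of_nonneg_left hexpT1 hexp2pos.le
        rw [mul_one] at h5
        exact mul_le_mul hPL (le_trans hRexp h5) hR0 (div_nonneg (by norm_num) hL0.le)
      calc D = (M * P) * (P * R) := by rw [hD]; ring
        _ ≤ (4 * L) * ((2 / L) * Real.exp 2) :=
            mul_le_mul hMP4 hPRb (mul_nonneg hP0.le hR0) (mul_nonneg (by norm_num) hL0.le)
        _ = 8 * Real.exp 2 * (L / L) := by ring
        _ = 8 * Real.exp 2 := by rw [div_self hLne, mul_one]
    · set B : ℝ := lam / ((1 - ε) * L) with hB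
      have hb'0 : 0 < B := div_pos hlam0 (mul_pos h1ε hL0)
      have hLB : L * B = lam / (1 - ε) := by
        rw [hB]; field_simp
      have hlamle : lam ≤ lam / (1 - ε) := by
        rw [le_div_iff₀ h1ε]
        exact mul_le_of_le_one_right hlam0.le (by linarith only [hε])
      have hLB1 : 1 ≤ L * B := by rw [hLB]; linarith only [hlamle, hlam4]
      have hLBγB : L * B ≤ γ * B := mul_le_mul_of_nonneg_right hγL.le hb'0.le
      have hanti := mul_exp_neg_anti hLB1 hLBγB
      have hγB_T : γ * B ≤ T := by
        have h6 : γ * B ≤ (L + γ) * B := mul_le_mul_of_nonneg_right (by linarith only [hL0]) hb'0.le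
        have h7 : (L + γ) * B = (L + γ) * lam / ((1 - ε) * L) := by rw [hB, mul_div_assoc]
        linarith only [h6, h7, hT1]
      have hexpmono : Real.exp (-T) ≤ Real.exp (-(γ * B)) :=
        Real.exp_le_exp.2 (by linarith only [hγB_T])
      have hexpLB : Real.exp (-(L * B)) ≤ Real.exp (-lam) :=
        Real.exp_le_exp.2 (by rw [hLB]; linarith only [hlamle])
      have hγ0 : 0 ≤ γ := by linarith only [hγL, hL0]
      have hγexp : γ * Real.exp (-T) ≤ 1 := by
        have h2'' := mul_le_mul_of_nonneg_left hexpmono hγ0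
        have h3 : γ * Real.exp (-(γ * B)) = (1 / B) * ((γ * B) * Real.exp (-(γ * B))) := by
          field_simp
        have h4 := mul_le_mul_of_nonneg_left hanti (le_of_lt (one_div_pos.2 hb'0))
        have h5 : (1 / B) * ((L * B) * Real.exp (-(L * B))) = L * Real.exp (-(L * B)) := by
          field_simp
        have h6 := mul_le_mul_of_nonneg_left hexpLB hL0.le
        linarith only [h2'', h3, h4, h5, h6, hLexplam]
      calc D = (M * P) * (P * R) := by rw [hD]; ring
        _ ≤ (4 * γ) * (Real.exp 2 * Real.exp (-T)) :=
            mul_le_mul (by linarith only [hMP, hγL]) hPR_le (mul_nonneg hP0.le hR0)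
              (by linarith only [hγ0])
        _ = 4 * Real.exp 2 * (γ * Real.exp (-T)) := by ring
        _ ≤ 4 * Real.exp 2 * 1 := mul_le_mul_of_nonneg_left hγexp (by positivity)
        _ ≤ 8 * Real.exp 2 := by linarith only [hexp2pos]
  -- exponential bound on (1-a)^(m-1)
  have hcastM : ((m n - 1 : ℕ) : ℝ) = M - 1 := by
    rw [hM, Nat.cast_sub hMnat, Nat.cast_one]
  have haM : L + γ - 1 - D ≤ a * (M - 1) := by
    have e1 : a * (M - 1) = QQ * M - QQ - P ^ 2 * R * M + P ^ 2 * R := by rw [haQ]; ring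
    have e2 : P ^ 2 * R * M = D := by rw [hD]; ring
    have hx : 0 ≤ P ^ 2 * R := mul_nonneg (sq_nonneg P) hR0
    linarith only [e1, e2, hx, hQ1, hQM]
  have hpowM : (1 - a) ^ (m n - 1) ≤ Real.exp (1 + D) * Real.exp (-L) * Real.exp (-γ) := by
    have h1 := pow_le_exp_neg ha0 ha1.le (m n - 1)
    have h2 : Real.exp (-(a * ((m n - 1 : ℕ) : ℝ))) ≤ Real.exp (1 + D - L - γ) := by
      apply Real.exp_le_exp.2
      rw [hcastM]
      linarith only [haM]
    have h3 : Real.exp (1 + D - L - γ) = Real.exp (1 + D) * Real.exp (-L) * Real.exp (-γ) := by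
      rw [← Real.exp_add, ← Real.exp_add]
      congr 1 <;> ring_nf
    linarith only [h1, h2, h3]
  -- final assembly
  have hnexpL : (n : ℝ) * Real.exp (-L) = 1 := by
    rw [Real.exp_neg, hexpL]; field_simp
  have hX0 : 0 ≤ (n : ℝ) * ((n : ℝ) * M * P ^ 2 * R) :=
    mul_nonneg hn0.le (mul_nonneg (mul_nonneg (mul_nonneg hn0.le hM0.le) (sq_nonneg P)) hR0)
  have hnMPR : (n : ℝ) * (M * P ^ 2 * R) ≤ 2 * Real.exp 2 * ((L + γ) * (T * Real.exp (-T))) := by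
    calc (n : ℝ) * (M * P ^ 2 * R) = (M * P) * (T * R) := by rw [hT]; ring
      _ ≤ (2 * (L + γ)) * (T * (Real.exp 2 * Real.exp (-T))) :=
          mul_le_mul hMP (mul_le_mul_of_nonneg_left hRexp hT0') (mul_nonneg hT0' hR0)
            (by linarith only [hLγ])
      _ = 2 * Real.exp 2 * ((L + γ) * (T * Real.exp (-T))) := by ring
  have hE1 : Real.exp (1 + D) ≤ Real.exp (1 + 8 * Real.exp 2) :=
    Real.exp_le_exp.2 (by linarith only [hDb])
  have hTeT0 : 0 ≤ T * Real.exp (-T) := mul_nonneg hT0' (Real.exp_pos _).le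
  have hmain : (n : ℝ) * ((n : ℝ) * M * P ^ 2 * R * (1 - a) ^ (m n - 1))
      ≤ Kc * ((L + γ) * (T * Real.exp (-T)) * Real.exp (-γ)) := by
    calc (n : ℝ) * ((n : ℝ) * M * P ^ 2 * R * (1 - a) ^ (m n - 1))
        = ((n : ℝ) * ((n : ℝ) * M * P ^ 2 * R)) * (1 - a) ^ (m n - 1) := by ring
      _ ≤ ((n : ℝ) * ((n : ℝ) * M * P ^ 2 * R))
            * (Real.exp (1 + D) * Real.exp (-L) * Real.exp (-γ)) :=
          mul_le_mul_of_nonneg_left hpowM hX0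
      _ = ((n : ℝ) * Real.exp (-L))
            * (((n : ℝ) * (M * P ^ 2 * R)) * Real.exp (1 + D) * Real.exp (-γ)) := by ring
      _ = ((n : ℝ) * (M * P ^ 2 * R)) * Real.exp (1 + D) * Real.exp (-γ) := by
          rw [hnexpL, one_mul]
      _ ≤ (2 * Real.exp 2 * ((L + γ) * (T * Real.exp (-T)))) * Real.exp (1 + 8 * Real.exp 2)
            * Real.exp (-γ) := by
          apply mul_le_mul_of_nonneg_right _ (Real.exp_pos _).le
          exact mul_le_mul hnMPR hE1 (Real.exp_pos _).le
            (mul_nonneg (by positivity) (mul_nonneg hLγ.le hTeT0))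
      _ = Kc * ((L + γ) * (T * Real.exp (-T)) * Real.exp (-γ)) := by rw [hKc]; ring
  have hgoal : Kc * ((L + γ) * (T * Real.exp (-T)) * Real.exp (-γ)) ≤ g n := by
    rcases le_or_gt γ L with hγL | hγL
    · have hT01 : (1:ℝ) ≤ T0 := by linarith only [hT04]
      have c1 : (L + γ) * (T * Real.exp (-T)) * Real.exp (-γ)
          ≤ (2 * L) * (T0 * Real.exp (-T0)) * Real.exp (-C0) := by
        apply mul_le_mul
        · exact mul_le_mul (by linarith only [hγL]) (mul_exp_neg_anti hT01 hT0T) hTeT0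
            (by linarith only [hL0])
        · exact Real.exp_le_exp.2 (by linarith only [hγC0])
        · exact (Real.exp_pos _).le
        · exact mul_nonneg (by linarith only [hL0])
            (mul_nonneg (by linarith only [hT01]) (Real.exp_pos _).le)
      have hsplit : Real.exp (-T0) = Real.exp (-(ρ * lam)) * Real.exp (-lam) := by
        rw [← Real.exp_add]
        congr 1
        rw [hT0]
        ring
      have e3 : Kc * ((2 * L) * (T0 * Real.exp (-T0)) * Real.exp (-C0))
          = K₁ * (lam * Real.exp (-(ρ * lam))) * (L * Real.exp (-lam)) := by
        rw [hsplit, hT0, hK₁]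
        ring
      have final1 : Kc * ((L + γ) * (T * Real.exp (-T)) * Real.exp (-γ))
          ≤ K₁ * (lam * Real.exp (-(ρ * lam))) := by
        calc Kc * ((L + γ) * (T * Real.exp (-T)) * Real.exp (-γ))
            ≤ Kc * ((2 * L) * (T0 * Real.exp (-T0)) * Real.exp (-C0)) :=
              mul_le_mul_of_nonneg_left c1 hKc0.le
          _ = K₁ * (lam * Real.exp (-(ρ * lam))) * (L * Real.exp (-lam)) := e3
          _ = K₁ * (lam * Real.exp (-(ρ * lam))) := by rw [hLexplam, mul_one]
      have hsecond : 0 ≤ K₂ * (L * Real.exp (-L)) :=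
        mul_nonneg hK₂0.le (mul_nonneg hL0.le (Real.exp_pos _).le)
      rw [hg]
      dsimp only
      linarith only [final1, hsecond]
    · have c2a : L + γ ≤ 2 * γ := by linarith only [hγL]
      have hγ0 : (0:ℝ) ≤ γ := by linarith only [hγL, hL0]
      have c2 : (L + γ) * (T * Real.exp (-T)) * Real.exp (-γ)
          ≤ (2 * γ) * 1 * Real.exp (-γ) := by
        apply mul_le_mul_of_nonneg_right _ (Real.exp_pos _).le
        exact mul_le_mul c2a (mul_exp_neg_le_one hT0') hTeT0 (by linarith only [hγ0])
      have hanti2 := mul_exp_neg_anti hL1 hγL.le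
      have final2 : Kc * ((L + γ) * (T * Real.exp (-T)) * Real.exp (-γ))
          ≤ K₂ * (L * Real.exp (-L)) := by
        calc Kc * ((L + γ) * (T * Real.exp (-T)) * Real.exp (-γ))
            ≤ Kc * ((2 * γ) * 1 * Real.exp (-γ)) := mul_le_mul_of_nonneg_left c2 hKc0.le
          _ = 2 * Kc * (γ * Real.exp (-γ)) := by ring
          _ ≤ 2 * Kc * (L * Real.exp (-L)) :=
              mul_le_mul_of_nonneg_left hanti2 (by linarith only [hKc0])
          _ = K₂ * (L * Real.exp (-L)) := by rw [hK₂]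
      have hfirst : 0 ≤ K₁ * (lam * Real.exp (-(ρ * lam))) :=
        mul_nonneg hK₁0.le (mul_nonneg hlam0.le (Real.exp_pos _).le)
      rw [hg]
      dsimp only
      linarith only [final2, hfirst]
  calc (n : ℝ) * ((n:ℝ) * M * P ^ 2 * R * (1 - a) ^ (m n - 1))
      ≤ Kc * ((L + γ) * (T * Real.exp (-T)) * Real.exp (-γ)) := hmain
    _ ≤ g n := hgoal

end AuxRIG

theorem no_degree_one_sparse (m : ℕ → ℕ) (p c : ℕ → ℝ)
    (hp : ∀ n, p n ∈ Set.Ioo (0 : ℝ) 1)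
    (hm : (fun (n : ℕ) => (Real.log n) ^ 2) =o[atTop] fun (n : ℕ) => (m n : ℝ))
    (ε : ℝ) (hε : 0 < ε)
    (hrange : ∀ᶠ (n : ℕ) in atTop, (m n : ℝ) < (1 - ε) * n * Real.log n / Real.log (Real.log n))
    (heq : ∀ᶠ (n : ℕ) in atTop,
      p n * (1 - (1 - p n) ^ (n - 1)) = (Real.log n + c n) / (m n))
    (hc : (∃ c₀ : ℝ, Tendsto c atTop (nhds c₀)) ∨ Tendsto c atTop atTop) :
    (∃ C : ℕ → ℝ, (C =o[atTop] fun (n : ℕ) => 1 / (n : ℝ)) ∧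
      ∀ n, ∀ v : Fin n, (rig n (m n) (p n) {ω | deg ω v = 1}).toReal ≤ C n) ∧
    Tendsto (fun (n : ℕ) => (rig n (m n) (p n) {ω | ∀ v, deg ω v ≠ 1}).toReal)
      atTop (nhds 1) := by
  classical
  have hten : Tendsto (fun n : ℕ => (n : ℝ) * Bq n (m n) (p n)) atTop (nhds 0) :=
    tendsto_nBq m p c hp hm ε hε hrange heq hc
  set C : ℕ → ℝ := fun n => Bq n (m n) (p n) with hCdef
  have hC0 : ∀ n, 0 ≤ C n := fun n => Bq_nonneg _ _ (hp n).1 (hp n).2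
  have hbound : ∀ n, ∀ v : Fin n, (rig n (m n) (p n) {ω | deg ω v = 1}).toReal ≤ C n :=
    fun n v => prob_deg_one_le n (m n) (p n) (hp n).1 (hp n).2 v
  have hlito : C =o[atTop] fun n : ℕ => 1 / (n : ℝ) := by
    rw [Asymptotics.isLittleO_iff]
    intro δ hδ
    filter_upwards [hten.eventually_lt_const hδ, eventually_ge_atTop 1] with n h1 hn1
    have hn0 : (0:ℝ) < (n:ℝ) := by exact_mod_cast Nat.lt_of_lt_of_le Nat.zero_lt_one hn1
    rw [Real.norm_eq_abs, Real.norm_eq_abs, abs_of_nonneg (hC0 n),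
      abs_of_nonneg (by positivity : (0:ℝ) ≤ 1 / (n:ℝ)), mul_one_div, le_div_iff₀ hn0]
    nlinarith [h1]
  refine ⟨⟨C, hlito, hbound⟩, ?_⟩
  have hUnb : ∀ n : ℕ, (rig n (m n) (p n)
      (⋃ v : Fin n, {ω | deg ω v = 1})).toReal ≤ (n : ℝ) * C n := by
    intro n
    have hrw : (⋃ v : Fin n, {ω : Fin n → Fin (m n) → Bool | deg ω v = 1})
        = ⋃ v ∈ Finset.univ, {ω : Fin n → Fin (m n) → Bool | deg ω v = 1} := by simp
    have h1 : rig n (m n) (p n) (⋃ v : Fin n, {ω | deg ω v = 1})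
        ≤ ∑ v : Fin n, rig n (m n) (p n) {ω | deg ω v = 1} := by
      rw [hrw]
      exact measure_biUnion_finset_le _ _
    have hfin : ∑ v : Fin n, rig n (m n) (p n) {ω | deg ω v = 1} ≠ ⊤ :=
      (ENNReal.sum_lt_top.2 fun v _ => measure_lt_top _ _).ne
    calc (rig n (m n) (p n) (⋃ v : Fin n, {ω | deg ω v = 1})).toReal
        ≤ (∑ v : Fin n, rig n (m n) (p n) {ω | deg ω v = 1}).toReal :=
          ENNReal.toReal_mono hfin h1
      _ = ∑ v : Fin n, (rig n (m n) (p n) {ω | deg ω v = 1}).toReal :=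
          ENNReal.toReal_sum fun v _ => measure_ne_top _ _
      _ ≤ ∑ _v : Fin n, C n := Finset.sum_le_sum fun v _ => hbound n v
      _ = (n : ℝ) * C n := by
          rw [Finset.sum_const, Finset.card_univ, Fintype.card_fin, nsmul_eq_mul]
  have hUn0 : Tendsto (fun n : ℕ => (rig n (m n) (p n)
      (⋃ v : Fin n, {ω | deg ω v = 1})).toReal) atTop (nhds 0) := by
    apply squeeze_zero (fun n => ENNReal.toReal_nonneg) hUnb hten
  have hPcompl : ∀ n : ℕ, (rig n (m n) (p n) {ω | ∀ v, deg ω v ≠ 1}).toReal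
      = 1 - (rig n (m n) (p n) (⋃ v : Fin n, {ω | deg ω v = 1})).toReal := by
    intro n
    have hmeas : MeasurableSet (⋃ v : Fin n, {ω : Fin n → Fin (m n) → Bool | deg ω v = 1}) :=
      (Set.to_countable _).measurableSet
    have hset : {ω : Fin n → Fin (m n) → Bool | ∀ v, deg ω v ≠ 1}
        = (⋃ v : Fin n, {ω | deg ω v = 1})ᶜ := by
      ext ω
      simp
    rw [hset, prob_compl_eq_one_sub hmeas,
      ENNReal.toReal_sub_of_le prob_le_one ENNReal.one_ne_top, ENNReal.toReal_one]
  have := (tendsto_const_nhds (x := (1:ℝ)) (f := atTop)).sub hUn0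
  rw [sub_zero] at this
  exact this.congr fun n => (hPcompl n).symm
end

section
/- Assume n ≥ m and liminf_{n→∞} mp/ln n ≥ 1 (i.e., mp ≥ (1+o(1)) ln n). Then for all sufficiently large n, the probability that there exists a set S ⊆ V of size |S| = n/5000 with W(S) ≤ 0.3·m is at most exp(-√n). -/
open MeasureTheory Filter

instance (p : ℝ) : IsProbabilityMeasure (bern p) := by unfold bern; infer_instance

lemma bern_false {p : ℝ} (h0 : 0 < p) (h1 : p < 1) : bern p {false} = ENNReal.ofReal (1 - p) := by
  have hmin : min (Real.toNNReal p) 1 = Real.toNNReal p := by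
    rw [min_eq_left]; exact Real.toNNReal_le_one.2 h1.le
  rw [bern, PMF.toMeasure_apply_singleton _ _ (measurableSet_singleton _)]
  simp only [PMF.bernoulli_apply, hmin, Bool.cond_false]
  rw [ENNReal.ofReal_sub 1 h0.le, ENNReal.ofReal_one]; rfl

lemma avoid_prob (m : ℕ) {p : ℝ} (h0 : 0 < p) (h1 : p < 1) (R : Finset (Fin m)) :
    (Measure.pi fun _ : Fin m => bern p) {f | ∀ w ∈ R, f w = false}
      = ENNReal.ofReal (1 - p) ^ R.card := by
  have hset : {f : Fin m → Bool | ∀ w ∈ R, f w = false}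
      = Set.univ.pi (fun w => if w ∈ R then {false} else Set.univ) := by
    ext f
    simp only [Set.mem_setOf_eq, Set.mem_pi, Set.mem_univ, forall_true_left]
    constructor
    · intro h w; by_cases hw : w ∈ R <;> simp [hw, h]
    · intro h w hw; have := h w; simpa [hw] using this
  rw [hset, Measure.pi_pi]
  simp only [apply_ite (bern p), bern_false h0 h1, measure_univ]
  rw [Finset.prod_ite_mem, Finset.univ_inter, Finset.prod_const]

lemma cyl_prob (n m : ℕ) {p : ℝ} (h0 : 0 < p) (h1 : p < 1)
    (S : Finset (Fin n)) (R : Finset (Fin m)) :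
    rig n m p {ω | ∀ v ∈ S, ∀ w ∈ R, ω v w = false}
      = ENNReal.ofReal (1 - p) ^ (S.card * R.card) := by
  have hset : {ω : Fin n → Fin m → Bool | ∀ v ∈ S, ∀ w ∈ R, ω v w = false}
      = Set.univ.pi (fun v => if v ∈ S then {f | ∀ w ∈ R, f w = false} else Set.univ) := by
    ext ω
    simp only [Set.mem_setOf_eq, Set.mem_pi, Set.mem_univ, forall_true_left]
    constructor
    · intro h v; by_cases hv : v ∈ S <;> simp [hv]; exact fun w hw => h v hv w hw
    · intro h v hv w hw; have := h v; rw [if_pos hv] at this; exact this w hw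
  rw [rig, hset, Measure.pi_pi]
  simp only [apply_ite (Measure.pi fun _ : Fin m => bern p), avoid_prob m h0 h1 R, measure_univ]
  rw [Finset.prod_ite_mem, Finset.univ_inter, Finset.prod_const, ← pow_mul, Nat.mul_comm R.card S.card]


set_option maxHeartbeats 1000000 in
theorem linear_sets_cover_features_m_small (m : ℕ → ℕ) (p : ℕ → ℝ)
    (hp : ∀ n, p n ∈ Set.Ioo (0 : ℝ) 1)
    (hnm : ∀ᶠ (n : ℕ) in atTop, m n ≤ n)
    (hmp : 1 ≤ Filter.liminf (fun (n : ℕ) => (m n : ℝ) * p n / Real.log n) atTop) :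
    ∀ᶠ (n : ℕ) in atTop,
      (rig n (m n) (p n)
        {ω | ∃ S : Set (Fin n), S.ncard = n / 5000 ∧
          (WS ω S : ℝ) ≤ 0.3 * (m n : ℝ)}).toReal
      ≤ Real.exp (-Real.sqrt n) := by
  have hbd : IsBoundedUnder (· ≥ ·) atTop (fun n : ℕ => (m n : ℝ) * p n / Real.log n) := by
    refine Filter.isBoundedUnder_of ⟨0, fun n => ?_⟩
    have h1 : (0:ℝ) ≤ (m n : ℝ) * p n := mul_nonneg (Nat.cast_nonneg _) (hp n).1.le
    exact div_nonneg h1 (Real.log_natCast_nonneg n)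
  have hmp' : ∀ᶠ n in atTop, (0.9:ℝ) < (m n : ℝ) * p n / Real.log n :=
    Filter.eventually_lt_of_lt_liminf (lt_of_lt_of_le (by norm_num) hmp) hbd
  have hlog : ∀ᶠ n : ℕ in atTop, (50000:ℝ) ≤ Real.log n :=
    (Real.tendsto_log_atTop.comp tendsto_natCast_atTop_atTop).eventually_ge_atTop 50000
  filter_upwards [hnm, hmp', hlog] with n hm hmp2 hlogn
  have hp0 := (hp n).1
  have hp1 := (hp n).2
  have h1p : (0:ℝ) ≤ 1 - p n := by linarith
  have hlogpos : (0:ℝ) < Real.log n := by linarith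
  -- basic size facts
  have hn0 : n ≠ 0 := by
    rintro rfl
    rw [Nat.cast_zero, Real.log_zero] at hlogn
    linarith
  have hn1 : (1:ℝ) ≤ (n:ℝ) := by exact_mod_cast Nat.one_le_iff_ne_zero.2 hn0
  have hnbig : (50001:ℝ) ≤ (n:ℝ) := by
    have := Real.log_le_sub_one_of_pos (by linarith : (0:ℝ) < n)
    linarith
  set s : ℕ := n / 5000 with hs_def
  set r : ℕ := ⌈(0.7:ℝ) * m n⌉₊ with hr_def
  set c : ENNReal := ENNReal.ofReal (1 - p n) with hc_def
  set k : ℕ := s * r with hk_def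
  set E : Finset (Fin n) × Finset (Fin (m n)) → Set (Fin n → Fin (m n) → Bool) :=
    fun pr => {ω | ∀ v ∈ pr.1, ∀ w ∈ pr.2, ω v w = false} with hE_def
  set P : Finset (Finset (Fin n) × Finset (Fin (m n))) :=
    Finset.univ.filter (fun pr => pr.1.card = s ∧ r ≤ pr.2.card) with hP_def
  -- inclusion
  have hsub : {ω : Fin n → Fin (m n) → Bool | ∃ S : Set (Fin n), S.ncard = n / 5000 ∧
      (WS ω S : ℝ) ≤ 0.3 * (m n : ℝ)} ⊆ ⋃ pr ∈ P, E pr := by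
    rintro ω ⟨S, hScard, hWS⟩
    set C : Set (Fin (m n)) := {w | ∃ v ∈ S, ω v w = true} with hC_def
    have hCW : C.ncard = WS ω S := rfl
    have hcompl : C.ncard + Cᶜ.ncard = m n := by
      have := Set.ncard_add_ncard_compl C
      simpa using this
    have hCle : C.ncard ≤ m n := by omega
    have hrle : r ≤ Cᶜ.toFinite.toFinset.card := by
      rw [← Set.ncard_eq_toFinset_card]
      refine Nat.ceil_le.2 ?_
      have h1 : (Cᶜ.ncard : ℝ) = (m n : ℝ) - C.ncard := by
        have : (C.ncard : ℝ) + (Cᶜ.ncard : ℝ) = (m n : ℝ) := by exact_mod_cast hcompl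
        linarith
      rw [h1, hCW]
      linarith
    refine Set.mem_iUnion₂.2 ⟨(S.toFinite.toFinset, Cᶜ.toFinite.toFinset), ?_, ?_⟩
    · simp only [hP_def, Finset.mem_filter, Finset.mem_univ, true_and]
      exact ⟨by rw [← Set.ncard_eq_toFinset_card]; exact hScard, hrle⟩
    · intro v hv w hw
      simp only [Set.Finite.mem_toFinset] at hv hw
      simp only [Set.mem_compl_iff, hC_def, Set.mem_setOf_eq] at hw
      by_contra hfalse
      exact hw ⟨v, hv, by simpa using hfalse⟩
  -- measure bound in ENNReal
  have hcle1 : c ≤ 1 := by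
    rw [hc_def]; exact ENNReal.ofReal_le_one.2 (by linarith)
  have hterm : ∀ pr ∈ P, rig n (m n) (p n) (E pr) ≤ c ^ k := by
    intro pr hpr
    simp only [hP_def, Finset.mem_filter, Finset.mem_univ, true_and] at hpr
    rw [hE_def, cyl_prob n (m n) hp0 hp1 pr.1 pr.2]
    have hle : k ≤ pr.1.card * pr.2.card := by
      rw [hk_def, hpr.1]; exact Nat.mul_le_mul_left _ hpr.2
    calc (c : ENNReal) ^ (pr.1.card * pr.2.card)
        = c ^ k * c ^ (pr.1.card * pr.2.card - k) := by rw [← pow_add]; congr 1; omega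
      _ ≤ c ^ k * 1 := by
          exact mul_le_mul_right (pow_le_one' hcle1 _) _
      _ = c ^ k := mul_one _
  have hmeasure : rig n (m n) (p n) {ω : Fin n → Fin (m n) → Bool |
      ∃ S : Set (Fin n), S.ncard = n / 5000 ∧ (WS ω S : ℝ) ≤ 0.3 * (m n : ℝ)}
      ≤ (2 ^ n * 2 ^ (m n) : ENNReal) * c ^ k := by
    refine le_trans (measure_mono hsub) ?_
    refine le_trans (measure_biUnion_finset_le P E) ?_
    refine le_trans (Finset.sum_le_card_nsmul P _ _ hterm) ?_
    rw [nsmul_eq_mul]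
    refine mul_le_mul_left ?_ _
    have hcard : P.card ≤ 2 ^ n * 2 ^ (m n) := by
      calc P.card ≤ Fintype.card (Finset (Fin n) × Finset (Fin (m n))) := Finset.card_le_univ P
        _ = 2 ^ n * 2 ^ (m n) := by
            simp [Fintype.card_prod, Fintype.card_finset, Fintype.card_fin]
    calc (P.card : ENNReal) ≤ ((2 ^ n * 2 ^ (m n) : ℕ) : ENNReal) := by exact_mod_cast hcard
      _ = 2 ^ n * 2 ^ (m n) := by push_cast; ring
  -- from hmp2: m p ≥ 0.9 log n
  have hmplog : (0.9:ℝ) * Real.log n ≤ (m n : ℝ) * p n := by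
    have := (lt_div_iff₀ hlogpos).1 hmp2
    linarith
  -- s ≥ n / 10000
  have hs : (n:ℝ) / 10000 ≤ (s:ℝ) := by
    have h5 := Nat.div_add_mod n 5000
    have hmod : n % 5000 < 5000 := Nat.mod_lt n (by norm_num)
    have hcast : (5000:ℝ) * s + (n % 5000 : ℕ) = n := by
      rw [hs_def]; exact_mod_cast h5
    have : ((n % 5000 : ℕ) : ℝ) ≤ 4999 := by exact_mod_cast Nat.lt_succ_iff.1 hmod
    nlinarith
  have hr' : (0.7:ℝ) * m n ≤ (r:ℝ) := Nat.le_ceil _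
  have hkcast : (k:ℝ) = (s:ℝ) * (r:ℝ) := by rw [hk_def]; push_cast; ring
  -- key: p * k ≥ 3 n
  have hpk : 3 * (n:ℝ) ≤ p n * k := by
    have h1 : (0.7:ℝ) * ((m n : ℝ) * p n) ≤ p n * r := by nlinarith
    have h2 : (0.63:ℝ) * Real.log n ≤ p n * r := by nlinarith
    have hs0 : (0:ℝ) ≤ (s:ℝ) := Nat.cast_nonneg _
    rw [hkcast]
    calc 3 * (n:ℝ) ≤ 0.63 * Real.log n * ((n:ℝ)/10000) := by nlinarith
      _ ≤ (p n * r) * (s:ℝ) := by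
          refine mul_le_mul h2 hs (by positivity) ?_
          positivity
      _ = p n * ((s:ℝ) * (r:ℝ)) := by ring
  -- real bound
  have hreal : (2:ℝ) ^ n * 2 ^ (m n) * (1 - p n) ^ k ≤ Real.exp (-Real.sqrt n) := by
    have e1 : (2:ℝ) ≤ Real.exp 1 := by have := Real.add_one_le_exp 1; linarith
    have e2 : (2:ℝ) ^ n ≤ Real.exp n := by
      calc (2:ℝ) ^ n ≤ Real.exp 1 ^ n := pow_le_pow_left₀ (by norm_num) e1 n
        _ = Real.exp n := by rw [← Real.exp_nat_mul]; ring_nf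
    have e2' : (2:ℝ) ^ (m n) ≤ Real.exp n := by
      calc (2:ℝ) ^ (m n) ≤ Real.exp 1 ^ (m n) := pow_le_pow_left₀ (by norm_num) e1 _
        _ = Real.exp (m n) := by rw [← Real.exp_nat_mul]; ring_nf
        _ ≤ Real.exp n := Real.exp_le_exp.2 (by exact_mod_cast hm)
    have e3 : (1 - p n) ^ k ≤ Real.exp (-(p n * k)) := by
      calc (1 - p n) ^ k ≤ Real.exp (-p n) ^ k :=
            pow_le_pow_left₀ h1p (by have := Real.add_one_le_exp (-p n); linarith) k
        _ = Real.exp (-(p n * k)) := by rw [← Real.exp_nat_mul]; ring_nf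
    have hsqrt : Real.sqrt n ≤ n := by
      have h := Real.sqrt_le_sqrt (by nlinarith : (n:ℝ) ≤ (n:ℝ)^2)
      rwa [Real.sqrt_sq (by positivity)] at h
    calc (2:ℝ) ^ n * 2 ^ (m n) * (1 - p n) ^ k
        ≤ Real.exp n * Real.exp n * Real.exp (-(p n * k)) := by
          refine mul_le_mul (mul_le_mul e2 e2' (by positivity) (by positivity))
            e3 (by positivity) (by positivity)
      _ = Real.exp ((n:ℝ) + n + -(p n * k)) := by rw [← Real.exp_add, ← Real.exp_add]
      _ ≤ Real.exp (-Real.sqrt n) := Real.exp_le_exp.2 (by linarith)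
  -- conclude
  have hbound : (2 ^ n * 2 ^ (m n) : ENNReal) * c ^ k
      = ENNReal.ofReal ((2:ℝ) ^ n * 2 ^ (m n) * (1 - p n) ^ k) := by
    rw [ENNReal.ofReal_mul (by positivity), ENNReal.ofReal_mul (by positivity),
      ENNReal.ofReal_pow h1p, ENNReal.ofReal_pow (by norm_num : (0:ℝ) ≤ 2),
      ENNReal.ofReal_pow (by norm_num : (0:ℝ) ≤ 2),
      ENNReal.ofReal_ofNat]
  refine ENNReal.toReal_le_of_le_ofReal (Real.exp_nonneg _) ?_
  exact le_trans hmeasure (le_trans (le_of_eq hbound) (ENNReal.ofReal_le_ofReal hreal))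
end
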